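/- Let V be an n-dimensional vector space (n ≥ 2), g = Σ_{j=1}^n a_j v_j⊗v_j* ∈ sl(V) diagonal with pairwise distinct eigenvalues a_1,…,a_n (Σ a_j = 0), and τ = Σ_{j=1}^n v_j* ∈ V*. Regard α_g + τ as a 1-form on the affine Lie algebra Aff(V) = gl(V) ⋉ V, where α_g = kil(g,·) is given by the Killing form of sl(V) extended by zero. Then d(α_g + τ) is a symplectic (non-degenerate) 2-form on Aff(V). -/

import Mathlib

set_option linter.unusedSectionVars false

attribute [local instance 100] LieRing.ofAssociativeRing

variable (K V : Type*) [RCLike K] [AddCommGroup V] [Module K V] [FiniteDimensional K V]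

/-- The special linear Lie algebra `sl(V)` of traceless endomorphisms, as a Lie
subalgebra of `gl(V) = End(V)`. -/
noncomputable def slK : LieSubalgebra K (Module.End K V) :=
  { LinearMap.ker (LinearMap.trace K V) with
    lie_mem' := by
      intro x y _ _
      simp [LinearMap.mem_ker, Ring.lie_def, map_sub, LinearMap.trace_mul_comm] }

lemma mem_slK (B : Module.End K V) : B ∈ slK K V ↔ LinearMap.trace K V B = 0 := Iff.rfl

/-- The projection of `gl(V)` onto `sl(V)` killing the scalar part; composing a
functional on `sl(V)` with it is the "extension by zero" relative to the decomposition
`gl(V) = 𝕂·id ⊕ sl(V)`. -/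
noncomputable def slProj [Nontrivial V] (B : Module.End K V) : slK K V :=
  ⟨B - ((LinearMap.trace K V B) / (Module.finrank K V : K)) • 1, by
    have h0 : ((Module.finrank K V : K)) ≠ 0 := by
      have h1 : 0 < Module.finrank K V := Module.finrank_pos
      exact_mod_cast Nat.cast_ne_zero.mpr h1.ne'
    rw [mem_slK, map_sub, map_smul, LinearMap.trace_one]
    rw [smul_eq_mul, div_mul_cancel₀ _ h0, sub_self]⟩

lemma slProj_of_traceless [Nontrivial V] (B : Module.End K V)
    (hB : LinearMap.trace K V B = 0) : (slProj K V B : Module.End K V) = B := by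
  simp [slProj, hB]

lemma trace_lie (A B : Module.End K V) : LinearMap.trace K V ⁅A, B⁆ = 0 := by
  simp [Ring.lie_def, map_sub, LinearMap.trace_mul_comm]

set_option maxHeartbeats 1000000 in
/-- Proposition 6(a): on `Aff(V) = gl(V) ⋉ V` (bracket
`[(A,u),(B,w)] = ([A,B], Aw - Bu)`), with `g = Σ aⱼ vⱼ⊗vⱼ* ∈ sl(V)` diagonal with
pairwise distinct eigenvalues summing to zero and `τ = Σ vⱼ*`, the Chevalley–Eilenberg
differential of `α_g + τ` (where `α_g = kil(g,·)` extended by zero) is symplectic, i.e.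
the form `(x,y) ↦ -(α_g+τ)([x,y])` is non-degenerate. -/
theorem stmt_17 [Nontrivial V] (n : ℕ) (hn : 2 ≤ n) (b : Module.Basis (Fin n) K V)
    (a : Fin n → K) (hinj : Function.Injective a) (hsum : ∑ j, a j = 0)
    (g : Module.End K V) (hg : g = ∑ j, a j • ((b.coord j).smulRight (b j)))
    (hgs : g ∈ slK K V)
    (τ : Module.Dual K V) (hτ : τ = ∑ j, b.coord j)
    (ρ : Module.End K V × V → K)
    (hρ : ∀ (B : Module.End K V) (w : V),
      ρ (B, w) = killingForm K (slK K V) ⟨g, hgs⟩ (slProj K V B) + τ w) :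
    ∀ x : Module.End K V × V,
      (∀ y : Module.End K V × V, ρ (⁅x.1, y.1⁆, x.1 y.2 - y.1 x.2) = 0) → x = 0 := by
  classical
  -- basic facts about g
  have hgb : ∀ k, g (b k) = a k • b k := by
    intro k
    simp only [hg, LinearMap.sum_apply, LinearMap.smul_apply, LinearMap.coe_smulRight,
      Module.Basis.coord_apply, Module.Basis.repr_self, Finsupp.single_apply]
    rw [Finset.sum_eq_single k] <;> simp +contextual [eq_comm]
  have hgc : ∀ (i : Fin n) (v : V), b.repr (g v) i = a i * b.repr v i := by
    intro i v
    simp only [hg, LinearMap.sum_apply, LinearMap.smul_apply,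
      LinearMap.coe_smulRight, Module.Basis.coord_apply, map_sum, map_smul,
      Module.Basis.repr_self, Finsupp.smul_single, smul_eq_mul, Finsupp.coe_finset_sum,
      Finset.sum_apply, Finsupp.single_apply]
    rw [Finset.sum_eq_single i] <;> simp +contextual [eq_comm, mul_comm]
  -- the standard endomorphism basis
  set E : Fin n × Fin n → Module.End K V := fun p => b.end p with hE
  have hEapp : ∀ (i j : Fin n) (v : V), E (i, j) v = b.repr v j • b i := by
    intro i j v
    have : E (i, j) = (b.coord j).smulRight (b i) := by
      apply b.ext
      intro k
      simp [hE, Module.Basis.end_apply_apply, Module.Basis.coord_apply, Module.Basis.repr_self,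
        Finsupp.single_apply, eq_comm, ite_smul]
    rw [this]; simp [Module.Basis.coord_apply]
  -- diagonal matrix entries of brackets with g
  have dentry : ∀ (M : Module.End K V) (i j : Fin n),
      b.repr (⁅g, M⁆ (b j)) i = (a i - a j) * b.repr (M (b j)) i := by
    intro M i j
    have : ⁅g, M⁆ (b j) = g (M (b j)) - M (g (b j)) := by
      simp [Ring.lie_def, LinearMap.sub_apply, Module.End.mul_apply]
    rw [this, hgb]
    simp only [map_sub, map_smul, Finsupp.sub_apply, Finsupp.smul_apply, smul_eq_mul, hgc]
    ring
  -- key formula for the Killing form against elements of sl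
  have key1 : ∀ Z : slK K V, killingForm K (slK K V) ⟨g, hgs⟩ Z =
      ∑ i, ∑ j, (a i - a j) *
        (b.repr ((Z : Module.End K V) (b i)) i - b.repr ((Z : Module.End K V) (b j)) j) := by
    intro Z
    rw [killingForm_apply_apply]
    set F : Module.End K V →ₗ[K] Module.End K V :=
      (LieAlgebra.ad K (Module.End K V) g) ∘ₗ (LieAlgebra.ad K (Module.End K V) (Z : Module.End K V))
      with hF
    have hFmem : ∀ X, F X ∈ (slK K V).toSubmodule := by
      intro X
      simp only [hF, LinearMap.comp_apply, LieAlgebra.ad_apply]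
      exact trace_lie K V _ _
    have hrestrict : (LieAlgebra.ad K (slK K V) ⟨g, hgs⟩) ∘ₗ (LieAlgebra.ad K (slK K V) Z) =
        F.restrict (fun x _ => hFmem x) := by
      apply LinearMap.ext
      intro z
      apply Subtype.ext
      rfl
    rw [hrestrict]
    have htr0 : (LinearMap.trace K ((slK K V).toSubmodule))
        (F.restrict (fun x _ => hFmem x)) = LinearMap.trace K (Module.End K V) F :=
      LinearMap.trace_restrict_eq_of_forall_mem (slK K V).toSubmodule F hFmem
        (fun x _ => hFmem x)
    refine htr0.trans ?_
    rw [LinearMap.trace_eq_matrix_trace K b.end F]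
    have stdrepr : ∀ (M : Matrix (Fin n) (Fin n) K) (p : Fin n × Fin n),
        (Matrix.stdBasis K (Fin n) (Fin n)).repr M p = M p.1 p.2 := by
      intro M p
      have hM : M = ∑ q : Fin n × Fin n, M q.1 q.2 • Matrix.stdBasis K (Fin n) (Fin n) q := by
        ext i j
        rw [Matrix.sum_apply]
        rw [Fintype.sum_prod_type]
        simp only [Matrix.stdBasis_eq_single, Matrix.smul_apply,
          Matrix.single, Matrix.of_apply, smul_eq_mul, mul_ite, mul_one, mul_zero,
          ite_and]
        simp [Finset.sum_ite_eq']
      conv_lhs => rw [hM]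
      rw [Module.Basis.repr_sum_self]
    have diag : ∀ p : Fin n × Fin n,
        (LinearMap.toMatrix b.end b.end F) p p =
          (a p.1 - a p.2) *
            (b.repr ((Z : Module.End K V) (b p.1)) p.1 -
              b.repr ((Z : Module.End K V) (b p.2)) p.2) := by
      rintro ⟨i, j⟩
      rw [LinearMap.toMatrix_apply]
      have h1 : b.end.repr (F (b.end (i, j))) (i, j) =
          b.repr ((F (b.end (i, j))) (b j)) i := by
        rw [Module.Basis.end_repr_apply, stdrepr, LinearMap.toMatrix_apply]
      rw [h1]
      have h2 : F (b.end (i, j)) = ⁅g, ⁅(Z : Module.End K V), E (i, j)⁆⁆ := by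
        simp [hF, LieAlgebra.ad_apply, hE]
      rw [h2, dentry]
      congr 1
      have h3 : ⁅(Z : Module.End K V), E (i, j)⁆ (b j) =
          (Z : Module.End K V) (E (i, j) (b j)) - E (i, j) ((Z : Module.End K V) (b j)) := by
        simp [Ring.lie_def, LinearMap.sub_apply, Module.End.mul_apply]
      rw [h3, hEapp, hEapp]
      simp [Module.Basis.repr_self, Finsupp.single_apply]
    simp only [Matrix.trace, Matrix.diag]
    calc ∑ p : Fin n × Fin n, (LinearMap.toMatrix b.end b.end F) p p
        = ∑ p : Fin n × Fin n, (a p.1 - a p.2) *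
            (b.repr ((Z : Module.End K V) (b p.1)) p.1 -
              b.repr ((Z : Module.End K V) (b p.2)) p.2) := by
          exact Finset.sum_congr rfl (fun p _ => diag p)
      _ = _ := by rw [Fintype.sum_prod_type]
  -- algebraic simplification of the double sum
  have sumlemma : ∀ c : Fin n → K,
      ∑ i, ∑ j, (a i - a j) * (c i - c j) = (2 * n) * ∑ i, a i * c i := by
    intro c
    have expand : ∀ i j : Fin n, (a i - a j) * (c i - c j) =
        a i * c i - a i * c j - a j * c i + a j * c j := by intro i j; ring
    simp_rw [expand]
    simp only [Finset.sum_add_distrib, Finset.sum_sub_distrib, Finset.sum_const,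
      Finset.card_univ, Fintype.card_fin, nsmul_eq_mul, ← Finset.mul_sum, ← Finset.sum_mul]
    rw [hsum]
    ring
  -- main argument
  rintro ⟨A, u⟩ hx
  -- step 1: τ ∘ A = 0
  have h0 : ∀ w, τ (A w) = 0 := by
    intro w
    have hproj0 : slProj K V (0 : Module.End K V) = 0 := Subtype.ext (by simp [slProj])
    have := hx (0, w)
    simpa [hρ, hproj0] using this
  -- step 2: test against (E (k,l), 0)
  have hkl : ∀ k l : Fin n,
      (2 * n : K) * ((a l - a k) * b.repr (A (b k)) l) = b.repr u l := by
    intro k l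
    have hx2 := hx (E (k, l), 0)
    simp only [map_zero, zero_sub] at hx2
    rw [hρ] at hx2
    have htr : LinearMap.trace K V ⁅A, E (k, l)⁆ = 0 := trace_lie K V _ _
    have hval : (slProj K V ⁅A, E (k, l)⁆ : Module.End K V) = ⁅A, E (k, l)⁆ :=
      slProj_of_traceless K V _ htr
    have hZ : slProj K V ⁅A, E (k, l)⁆ =
        (⟨⁅A, E (k, l)⁆, (mem_slK K V _).mpr htr⟩ : slK K V) := Subtype.ext hval
    rw [hZ, key1] at hx2
    -- compute the diagonal entries of ⁅A, E (k,l)⁆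
    have centries : ∀ i : Fin n, b.repr (⁅A, E (k, l)⁆ (b i)) i =
        (if i = l then b.repr (A (b k)) l else 0) -
          (if i = k then b.repr (A (b k)) l else 0) := by
      intro i
      have h3 : ⁅A, E (k, l)⁆ (b i) = A (E (k, l) (b i)) - E (k, l) (A (b i)) := by
        simp [Ring.lie_def, LinearMap.sub_apply, Module.End.mul_apply]
      rw [h3, hEapp, hEapp]
      simp only [map_sub, map_smul, Finsupp.sub_apply, Finsupp.smul_apply, smul_eq_mul,
        Module.Basis.repr_self, Finsupp.single_apply]
      rcases eq_or_ne i l with hil | hil <;> rcases eq_or_ne i k with hik | hik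
      · subst hil
        simp_all
      · subst hil
        simp [hik, Ne.symm hik]
      · subst hik
        simp [hil, Ne.symm hil]
      · simp [hil, hik, Ne.symm hil, Ne.symm hik]
    have hsum2 : ∑ i, ∑ j, (a i - a j) *
        (b.repr (⁅A, E (k, l)⁆ (b i)) i - b.repr (⁅A, E (k, l)⁆ (b j)) j) =
        (2 * n : K) * ((a l - a k) * b.repr (A (b k)) l) := by
      rw [sumlemma (fun i => b.repr (⁅A, E (k, l)⁆ (b i)) i)]
      congr 1
      simp_rw [centries]
      rw [Finset.sum_congr rfl (fun i _ => mul_sub (a i) _ _), Finset.sum_sub_distrib]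
      simp_rw [mul_ite, mul_zero]
      rw [Finset.sum_ite_eq' Finset.univ l, Finset.sum_ite_eq' Finset.univ k]
      simp only [Finset.mem_univ, if_true]
      ring
    rw [hsum2] at hx2
    -- compute τ (E (k,l) u)
    have hτb : τ (b k) = 1 := by
      rw [hτ, LinearMap.sum_apply]
      simp only [Module.Basis.coord_apply, Module.Basis.repr_self, Finsupp.single_apply]
      rw [Finset.sum_ite_eq]
      simp
    have hτE : τ (E (k, l) u) = b.repr u l := by
      rw [hEapp, map_smul, smul_eq_mul, hτb, mul_one]
    rw [map_neg, hτE] at hx2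
    linear_combination hx2
  -- step 3: u = 0
  have hu : u = 0 := by
    apply b.ext_elem
    intro l
    have := hkl l l
    simpa using this.symm
  -- step 4: off-diagonal entries of A vanish
  have h2n : (2 * n : K) ≠ 0 := by
    have h : ((2 * n : ℕ) : K) ≠ 0 := Nat.cast_ne_zero.mpr (by omega)
    push_cast at h
    exact h
  have hoff : ∀ k l : Fin n, k ≠ l → b.repr (A (b k)) l = 0 := by
    intro k l hne
    have := hkl k l
    rw [hu] at this
    simp only [map_zero, Finsupp.coe_zero, Pi.zero_apply] at this
    have hal : a l - a k ≠ 0 := sub_ne_zero.mpr (fun h => hne (hinj h).symm)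
    have := mul_eq_zero.mp this
    rcases this with h | h
    · exact absurd h h2n
    · rcases mul_eq_zero.mp h with h' | h'
      · exact absurd h' hal
      · exact h'
  -- step 5: diagonal entries of A vanish
  have hdiag : ∀ k : Fin n, b.repr (A (b k)) k = 0 := by
    intro k
    have := h0 (b k)
    rw [hτ, LinearMap.sum_apply] at this
    simp only [Module.Basis.coord_apply] at this
    rwa [Finset.sum_eq_single k (fun j _ hj => hoff k j hj.symm) (by simp)] at this
  have hA : A = 0 := by
    apply b.ext
    intro k
    apply b.ext_elem
    intro j
    by_cases hjk : j = k
    · subst hjk; simpa using hdiag j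
    · simpa using hoff k j (fun h => hjk h.symm)
  simp [hA, hu]
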